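/- Let n ≥ 1, let 0 < τ₁ < τ₂ be temperatures with τ_δ = 1/τ₁ − 1/τ₂, let L ∈ ℝ^{n×n} be symmetric, let c ≥ 0, and let U : ℝⁿ → ℝ be continuously differentiable. Then for every twice continuously differentiable f : ℝⁿ × ℝⁿ → ℝ, the Carré du Champ operator Γᶜ(f) = (1/2)𝓛ᶜ(f²) − f·𝓛ᶜ(f) satisfies, pointwise in (x,y), Γᶜ(f)(x,y) = τ₁ (L∇ₓf(x,y))·∇ₓf(x,y) + τ₂ (L∇_yf(x,y))·∇_yf(x,y) + (c/2) s(x,y) (f(y,x) − f(x,y))². -/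

import Mathlib

open MeasureTheory Matrix

/-- The swap function `s(x,y) = min{1, exp(τ_δ (U(x) − U(y)))}` with `τ_δ = 1/τ₁ − 1/τ₂`. -/
noncomputable def swapS {n : ℕ} (τ₁ τ₂ : ℝ) (U : (Fin n → ℝ) → ℝ) (x y : Fin n → ℝ) : ℝ :=
  min 1 (Real.exp ((1 / τ₁ - 1 / τ₂) * (U x - U y)))

/-- The gradient vector of `h : ℝⁿ → ℝ` at `x`, with components `∂h/∂x_i(x)`. -/
noncomputable def gradVec {n : ℕ} (h : (Fin n → ℝ) → ℝ) (x : Fin n → ℝ) : Fin n → ℝ :=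
  fun i => fderiv ℝ h x (Pi.single i 1)

/-- The generator `𝓛ᶜ` of the replica exchange preconditioned Langevin jump process. -/
noncomputable def repGen {n : ℕ} (L : Matrix (Fin n) (Fin n) ℝ) (τ₁ τ₂ c : ℝ)
    (U : (Fin n → ℝ) → ℝ) (f : (Fin n → ℝ) → (Fin n → ℝ) → ℝ) (x y : Fin n → ℝ) : ℝ :=
  -((L.mulVec (gradVec U x)) ⬝ᵥ (gradVec (fun x' => f x' y) x))
    + τ₁ * ∑ i, ∑ j, L i j *
        gradVec (fun x' => gradVec (fun x'' => f x'' y) x' j) x i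
    - (L.mulVec (gradVec U y)) ⬝ᵥ (gradVec (f x) y)
    + τ₂ * ∑ i, ∑ j, L i j *
        gradVec (fun y' => gradVec (f x) y' j) y i
    + c * swapS τ₁ τ₂ U x y * (f y x - f x y)

lemma gradVec_sq {n : ℕ} {h : (Fin n → ℝ) → ℝ} (hh : Differentiable ℝ h)
    (z : Fin n → ℝ) (j : Fin n) :
    gradVec (fun w => h w ^ 2) z j = 2 * h z * gradVec h z j := by
  have H : HasFDerivAt (fun w => h w ^ 2) (h z • fderiv ℝ h z + h z • fderiv ℝ h z) z := by
    have := ((hh z).hasFDerivAt.mul (hh z).hasFDerivAt)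
    rw [show (fun w => h w ^ 2) = h * h from funext fun w => pow_two (h w)]; exact this
  simp only [gradVec, H.fderiv, ContinuousLinearMap.add_apply, ContinuousLinearMap.coe_smul',
    Pi.smul_apply, smul_eq_mul]
  ring

lemma diff_grad {n : ℕ} {h : (Fin n → ℝ) → ℝ} (hh : ContDiff ℝ 2 h) (v : Fin n → ℝ) :
    Differentiable ℝ (fun z => fderiv ℝ h z v) := by
  have h1 : ContDiff ℝ 1 (fderiv ℝ h) := hh.fderiv_right (by norm_num)
  exact (h1.differentiable (by norm_num)).clm_apply (differentiable_const v)

lemma gradVec_grad_sq {n : ℕ} {h : (Fin n → ℝ) → ℝ} (hh : ContDiff ℝ 2 h)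
    (x : Fin n → ℝ) (i j : Fin n) :
    gradVec (fun z => gradVec (fun w => h w ^ 2) z j) x i
      = 2 * (gradVec h x i * gradVec h x j
          + h x * gradVec (fun z => gradVec h z j) x i) := by
  have hd : Differentiable ℝ h := hh.differentiable (by norm_num)
  have hrw : (fun z => gradVec (fun w => h w ^ 2) z j)
      = fun z => 2 * (h z * gradVec h z j) := by
    funext z; rw [gradVec_sq hd z j, mul_assoc]
  rw [hrw]
  have hg : Differentiable ℝ (fun z => gradVec h z j) := diff_grad hh _
  have hmul : HasFDerivAt (fun z => h z * gradVec h z j)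
      (h x • fderiv ℝ (fun z => gradVec h z j) x + gradVec h x j • fderiv ℝ h x) x :=
    (hd x).hasFDerivAt.mul (hg x).hasFDerivAt
  have H := hmul.const_mul (2 : ℝ)
  simp only [gradVec] at H ⊢
  rw [H.fderiv]
  simp only [ContinuousLinearMap.coe_smul', Pi.smul_apply, smul_eq_mul,
    ContinuousLinearMap.add_apply]
  ring

/-- Pointwise formula for the Carré du Champ operator
`Γᶜ(f) = (1/2)𝓛ᶜ(f²) − f 𝓛ᶜ(f)` of the replica exchange generator:
`Γᶜ(f)(x,y) = τ₁ (L∇ₓf)·∇ₓf + τ₂ (L∇_yf)·∇_yf + (c/2) s(x,y) (f(y,x) − f(x,y))²`. -/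
theorem carre_du_champ_repGen (n : ℕ) (hn : 1 ≤ n)
    (τ₁ τ₂ : ℝ) (hτ₁ : 0 < τ₁) (hτ₁₂ : τ₁ < τ₂)
    (L : Matrix (Fin n) (Fin n) ℝ) (hL : L.IsSymm)
    (c : ℝ) (hc : 0 ≤ c)
    (U : (Fin n → ℝ) → ℝ) (hU : ContDiff ℝ 1 U)
    (f : (Fin n → ℝ) → (Fin n → ℝ) → ℝ)
    (hf : ContDiff ℝ 2 (Function.uncurry f)) :
    ∀ x y : Fin n → ℝ,
      (1 / 2) * repGen L τ₁ τ₂ c U (fun x' y' => (f x' y') ^ 2) x y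
          - f x y * repGen L τ₁ τ₂ c U f x y
        = τ₁ * ((L.mulVec (gradVec (fun x' => f x' y) x)) ⬝ᵥ (gradVec (fun x' => f x' y) x))
          + τ₂ * ((L.mulVec (gradVec (f x) y)) ⬝ᵥ (gradVec (f x) y))
          + (c / 2) * swapS τ₁ τ₂ U x y * (f y x - f x y) ^ 2 := by
  intro x y
  -- the two partial functions are C²
  have h1 : ContDiff ℝ 2 (fun x' => f x' y) := by
    have : ContDiff ℝ 2 (fun x' : Fin n → ℝ => (x', y)) := contDiff_id.prodMk contDiff_const
    exact hf.comp this
  have h2 : ContDiff ℝ 2 (f x) := by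
    have : ContDiff ℝ 2 (fun y' : Fin n → ℝ => (x, y')) := contDiff_const.prodMk contDiff_id
    exact hf.comp this
  have h1d : Differentiable ℝ (fun x' => f x' y) := h1.differentiable (by norm_num)
  have h2d : Differentiable ℝ (f x) := h2.differentiable (by norm_num)
  -- abbreviations
  set g₁ : Fin n → ℝ := gradVec (fun x' => f x' y) x with hg₁
  set g₂ : Fin n → ℝ := gradVec (f x) y with hg₂
  set F : ℝ := f x y with hF
  set G : ℝ := f y x with hG
  set s : ℝ := swapS τ₁ τ₂ U x y with hs
  -- first order rewrites
  have e1 : gradVec (fun x' => f x' y ^ 2) x = fun i => 2 * F * g₁ i := by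
    funext i; exact gradVec_sq h1d x i
  have e2 : gradVec (fun y' => f x y' ^ 2) y = fun i => 2 * F * g₂ i := by
    funext i; exact gradVec_sq h2d y i
  -- second order rewrites
  have e3 : ∀ i j, gradVec (fun x' => gradVec (fun x'' => f x'' y ^ 2) x' j) x i
      = 2 * (g₁ i * g₁ j
          + F * gradVec (fun x' => gradVec (fun x'' => f x'' y) x' j) x i) :=
    fun i j => gradVec_grad_sq h1 x i j
  have e4 : ∀ i j, gradVec (fun y' => gradVec (fun y'' => f x y'' ^ 2) y' j) y i
      = 2 * (g₂ i * g₂ j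
          + F * gradVec (fun y' => gradVec (f x) y' j) y i) :=
    fun i j => gradVec_grad_sq h2 y i j
  -- dot products with scaled vectors
  have d1 : ∀ u : Fin n → ℝ, u ⬝ᵥ (fun i => 2 * F * g₁ i) = 2 * F * (u ⬝ᵥ g₁) := by
    intro u; simp [dotProduct, Finset.mul_sum]; apply Finset.sum_congr rfl; intros; ring
  have d2 : ∀ u : Fin n → ℝ, u ⬝ᵥ (fun i => 2 * F * g₂ i) = 2 * F * (u ⬝ᵥ g₂) := by
    intro u; simp [dotProduct, Finset.mul_sum]; apply Finset.sum_congr rfl; intros; ring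
  -- split sums
  have sum1 : ∑ i, ∑ j, L i j * (2 * (g₁ i * g₁ j
        + F * gradVec (fun x' => gradVec (fun x'' => f x'' y) x' j) x i))
      = 2 * (L.mulVec g₁ ⬝ᵥ g₁)
        + 2 * F * ∑ i, ∑ j, L i j * gradVec (fun x' => gradVec (fun x'' => f x'' y) x' j) x i := by
    simp only [mulVec, dotProduct, Finset.sum_mul, Finset.mul_sum, ← Finset.sum_add_distrib]
    apply Finset.sum_congr rfl; intros i _; apply Finset.sum_congr rfl; intros j _; ring
  have sum2 : ∑ i, ∑ j, L i j * (2 * (g₂ i * g₂ j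
        + F * gradVec (fun y' => gradVec (f x) y' j) y i))
      = 2 * (L.mulVec g₂ ⬝ᵥ g₂)
        + 2 * F * ∑ i, ∑ j, L i j * gradVec (fun y' => gradVec (f x) y' j) y i := by
    simp only [mulVec, dotProduct, Finset.sum_mul, Finset.mul_sum, ← Finset.sum_add_distrib]
    apply Finset.sum_congr rfl; intros i _; apply Finset.sum_congr rfl; intros j _; ring
  simp only [repGen]
  simp only [e1, e2]
  rw [show (∑ i, ∑ j, L i j *
        gradVec (fun x' => gradVec (fun x'' => f x'' y ^ 2) x' j) x i)
      = ∑ i, ∑ j, L i j * (2 * (g₁ i * g₁ j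
          + F * gradVec (fun x' => gradVec (fun x'' => f x'' y) x' j) x i)) by
    apply Finset.sum_congr rfl; intros i _; apply Finset.sum_congr rfl; intros j _
    rw [e3 i j]]
  rw [show (∑ i, ∑ j, L i j *
        gradVec (fun y' => gradVec (fun y'' => f x y'' ^ 2) y' j) y i)
      = ∑ i, ∑ j, L i j * (2 * (g₂ i * g₂ j
          + F * gradVec (fun y' => gradVec (f x) y' j) y i)) by
    apply Finset.sum_congr rfl; intros i _; apply Finset.sum_congr rfl; intros j _
    rw [e4 i j]]
  rw [d1, d2, sum1, sum2]
  ring
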